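/- Let G be a simple graph, x a vertex, and consider the Lozin transform H = L_x(G; N_G(x), ∅) in which all of N_G(x) is attached to the new vertex y of the added path y–a–b–z. Then the independence complex of H is homotopy equivalent to the suspension of the independence complex of G. -/

import Mathlib

/-- An abstract simplicial complex on the vertex type `V`. -/
structure SComplex (V : Type*) where
  faces : Set (Finset V)
  down_closed : ∀ ⦃s t : Finset V⦄, s ∈ faces → t ⊆ s → t ∈ faces

/-- The independence complex of a graph: faces are the (finite) independent sets. -/
def indComplex {V : Type*} (G : SimpleGraph V) : SComplex V where
  faces := {s : Finset V | ∀ a ∈ s, ∀ b ∈ s, ¬ G.Adj a b}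
  down_closed := fun _ _ hs hts a ha b hb => hs a (hts ha) b (hts hb)

/-- The geometric realization of an abstract simplicial complex, as a subspace of `V → ℝ`. -/
def geomRealization {V : Type*} (K : SComplex V) : Set (V → ℝ) :=
  {f | (∀ v, 0 ≤ f v) ∧
    ∃ s ∈ K.faces, (∀ v, v ∉ s → f v = 0) ∧ ∑ v ∈ s, f v = 1}

/-- The gluing relation for the unreduced suspension: `X × I` with `X × {0}` collapsed to
the pole `inr false` and `X × {1}` collapsed to the pole `inr true`. -/
def suspRel (X : Type*) : (X × unitInterval ⊕ Bool) → (X × unitInterval ⊕ Bool) → Prop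
  | Sum.inl a, Sum.inl b => a = b ∨ (a.2 = 0 ∧ b.2 = 0) ∨ (a.2 = 1 ∧ b.2 = 1)
  | Sum.inl a, Sum.inr i => (a.2 = 0 ∧ i = false) ∨ (a.2 = 1 ∧ i = true)
  | Sum.inr i, Sum.inl a => (a.2 = 0 ∧ i = false) ∨ (a.2 = 1 ∧ i = true)
  | Sum.inr i, Sum.inr j => i = j

/-- The unreduced suspension of a topological space. -/
def Susp (X : Type*) [TopologicalSpace X] : Type _ := Quot (suspRel X)

instance (X : Type*) [TopologicalSpace X] : TopologicalSpace (Susp X) :=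
  instTopologicalSpaceQuot

/-- The Lozin transform `L_x(G; Y, Z)`: delete `x`, add a path `y–a–b–z` on four new
vertices (`inr 0 = y`, `inr 1 = a`, `inr 2 = b`, `inr 3 = z`), join `y` to all of `Y`
and `z` to all of `Z`. -/
def lozin {V : Type*} (G : SimpleGraph V) (x : V) (Y Z : Set V) :
    SimpleGraph ({v : V // v ≠ x} ⊕ Fin 4) :=
  SimpleGraph.fromRel fun p q =>
    match p, q with
    | Sum.inl u, Sum.inl v => G.Adj u.1 v.1
    | Sum.inl u, Sum.inr i => (i = 0 ∧ u.1 ∈ Y) ∨ (i = 3 ∧ u.1 ∈ Z)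
    | Sum.inr i, Sum.inr j => (i = 0 ∧ j = 1) ∨ (i = 1 ∧ j = 2) ∨ (i = 2 ∧ j = 3)
    | _, _ => False


namespace LozinAux

open Finset

variable {V : Type*} (G : SimpleGraph V) (x : V)

abbrev Hg : SimpleGraph ({v : V // v ≠ x} ⊕ Fin 4) := lozin G x (G.neighborSet x) ∅

variable {G x}

lemma adj_ll {u v : {v : V // v ≠ x}} :
    (Hg G x).Adj (Sum.inl u) (Sum.inl v) ↔ G.Adj u.1 v.1 := by
  simp only [Hg, lozin, SimpleGraph.fromRel_adj]
  constructor
  · rintro ⟨-, h | h⟩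
    · exact h
    · exact h.symm
  · intro h
    refine ⟨?_, Or.inl h⟩
    intro he
    injection he with he
    exact G.irrefl (he ▸ h)

lemma adj_l0 {u : {v : V // v ≠ x}} :
    (Hg G x).Adj (Sum.inl u) (Sum.inr 0) ↔ G.Adj x u.1 := by
  simp only [Hg, lozin, SimpleGraph.fromRel_adj]
  simp [SimpleGraph.mem_neighborSet]

lemma not_adj_l1 {u : {v : V // v ≠ x}} : ¬ (Hg G x).Adj (Sum.inl u) (Sum.inr 1) := by
  simp [Hg, lozin, SimpleGraph.fromRel_adj]

lemma not_adj_l2 {u : {v : V // v ≠ x}} : ¬ (Hg G x).Adj (Sum.inl u) (Sum.inr 2) := by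
  simp [Hg, lozin, SimpleGraph.fromRel_adj]

lemma not_adj_l3 {u : {v : V // v ≠ x}} : ¬ (Hg G x).Adj (Sum.inl u) (Sum.inr 3) := by
  simp [Hg, lozin, SimpleGraph.fromRel_adj]

lemma not_adj_02 : ¬ (Hg G x).Adj (Sum.inr 0) (Sum.inr 2) := by
  simp [Hg, lozin, SimpleGraph.fromRel_adj]

lemma not_adj_03 : ¬ (Hg G x).Adj (Sum.inr 0) (Sum.inr 3) := by
  simp [Hg, lozin, SimpleGraph.fromRel_adj]

lemma adj_12 : (Hg G x).Adj (Sum.inr 1) (Sum.inr 2) := by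
  simp [Hg, lozin, SimpleGraph.fromRel_adj]

lemma adj_23 : (Hg G x).Adj (Sum.inr 2) (Sum.inr 3) := by
  simp [Hg, lozin, SimpleGraph.fromRel_adj]

lemma adj_z_iff {w : {v : V // v ≠ x} ⊕ Fin 4} :
    (Hg G x).Adj w (Sum.inr 3) ↔ w = Sum.inr 2 := by
  rcases w with u | i
  · simp [not_adj_l3]
  · fin_cases i <;>
      simp [Hg, lozin, SimpleGraph.fromRel_adj, Fin.ext_iff, -Fin.val_eq_zero_iff] <;> decide

end LozinAux

namespace LozinAux2

open Finset

variable {W : Type*}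

lemma geom_sum_eq_one {K : SComplex W} {f : W → ℝ} (hf : f ∈ geomRealization K)
    {S : Finset W} (h0 : ∀ w ∉ S, f w = 0) : ∑ w ∈ S, f w = 1 := by
  classical
  obtain ⟨-, s, _, hvan, hsum⟩ := hf
  have h1 : ∑ w ∈ S ∪ s, f w = ∑ w ∈ s, f w :=
    (Finset.sum_subset Finset.subset_union_right (fun w _ hws => hvan w hws)).symm
  have h2 : ∑ w ∈ S ∪ s, f w = ∑ w ∈ S, f w :=
    (Finset.sum_subset Finset.subset_union_left (fun w _ hws => h0 w hws)).symm
  rw [← h2, h1, hsum]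

lemma geom_pair {H' : SimpleGraph W} {f : W → ℝ}
    (hf : f ∈ geomRealization (indComplex H')) {w₁ w₂ : W}
    (h1 : f w₁ ≠ 0) (h2 : f w₂ ≠ 0) : ¬ H'.Adj w₁ w₂ := by
  obtain ⟨-, s, hs, hvan, -⟩ := hf
  have hw1 : w₁ ∈ s := by by_contra hc; exact h1 (hvan _ hc)
  have hw2 : w₂ ∈ s := by by_contra hc; exact h2 (hvan _ hc)
  exact hs w₁ hw1 w₂ hw2

end LozinAux2

namespace LozinMain

open Finset LozinAux LozinAux2

lemma fin4 : ∀ i : Fin 4, i = 0 ∨ i = 1 ∨ i = 2 ∨ i = 3 := by decide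

lemma inr_ne {α : Type*} {i j : Fin 4} (h : i ≠ j) :
    (Sum.inr i : α ⊕ Fin 4) ≠ Sum.inr j := fun he => h (by injection he)

variable {V : Type*}

/-- inclusion of old vertices, sending `x` to the new vertex `y = inr 0`. -/
noncomputable def eV (x : V) (v : V) : {v : V // v ≠ x} ⊕ Fin 4 :=
  letI := Classical.dec (v = x)
  if h : v = x then Sum.inr 0 else Sum.inl ⟨v, h⟩

lemma eV_of_ne {x v : V} (h : v ≠ x) : eV x v = Sum.inl ⟨v, h⟩ := by
  unfold eV; exact dif_neg h

lemma eV_of_eq {x v : V} (h : v = x) : eV x v = Sum.inr 0 := by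
  unfold eV; exact dif_pos h

lemma eV_inj {x : V} : Function.Injective (eV x) := by
  intro u v h
  by_cases h1 : u = x <;> by_cases h2 : v = x
  · exact h1.trans h2.symm
  · rw [eV_of_eq h1, eV_of_ne h2] at h; exact absurd h (by simp)
  · rw [eV_of_ne h1, eV_of_eq h2] at h; exact absurd h (by simp)
  · rw [eV_of_ne h1, eV_of_ne h2] at h
    injection h with h; exact congrArg Subtype.val h

lemma eV_ne_a {x v : V} : eV x v ≠ Sum.inr 1 := by
  by_cases h : v = x
  · rw [eV_of_eq h]; exact inr_ne (by decide)
  · rw [eV_of_ne h]; simp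

lemma eV_ne_b {x v : V} : eV x v ≠ Sum.inr 2 := by
  by_cases h : v = x
  · rw [eV_of_eq h]; exact inr_ne (by decide)
  · rw [eV_of_ne h]; simp

lemma eV_ne_z {x v : V} : eV x v ≠ Sum.inr 3 := by
  by_cases h : v = x
  · rw [eV_of_eq h]; exact inr_ne (by decide)
  · rw [eV_of_ne h]; simp

def bt (t : ℝ) : ℝ := max (2*t - 1) 0
def zt (t : ℝ) : ℝ := max (1 - 2*t) 0
def sg (t : ℝ) : ℝ := 1 - bt t - zt t

lemma bt_nonneg (t : ℝ) : 0 ≤ bt t := le_max_right _ _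
lemma zt_nonneg (t : ℝ) : 0 ≤ zt t := le_max_right _ _

lemma sg_nonneg {t : ℝ} (h0 : 0 ≤ t) (h1 : t ≤ 1) : 0 ≤ sg t := by
  rcases le_total t (1/2 : ℝ) with h | h
  · have hb : bt t = 0 := max_eq_right (by linarith)
    have hz : zt t = 1 - 2*t := max_eq_left (by linarith)
    simp [sg, hb, hz]; linarith
  · have hb : bt t = 2*t - 1 := max_eq_left (by linarith)
    have hz : zt t = 0 := max_eq_right (by linarith)
    simp [sg, hb, hz]; linarith

lemma bt_sub_zt (t : ℝ) : bt t - zt t = 2*t - 1 := by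
  rcases le_total t (1/2 : ℝ) with h | h
  · have hb : bt t = 0 := max_eq_right (by linarith)
    have hz : zt t = 1 - 2*t := max_eq_left (by linarith)
    rw [hb, hz]; ring
  · have hb : bt t = 2*t - 1 := max_eq_left (by linarith)
    have hz : zt t = 0 := max_eq_right (by linarith)
    rw [hb, hz]; ring

variable (G : SimpleGraph V) (x : V)

/-- the value function for the map `ΣX → |Ind H|`. -/
def phiVal (f : V → ℝ) (t : ℝ) : ({v : V // v ≠ x} ⊕ Fin 4) → ℝ :=
  Sum.elim (fun v => sg t * f v.1)
    (fun i => if i = 0 then sg t * f x else if i = 2 then bt t else if i = 3 then zt t else 0)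

variable {x}

lemma phiVal_inl (f : V → ℝ) (t : ℝ) (u : {v : V // v ≠ x}) :
    phiVal x f t (Sum.inl u) = sg t * f u.1 := rfl
lemma phiVal_y (f : V → ℝ) (t : ℝ) : phiVal x f t (Sum.inr 0) = sg t * f x := rfl
lemma phiVal_a (f : V → ℝ) (t : ℝ) : phiVal x f t (Sum.inr 1) = 0 := rfl
lemma phiVal_b (f : V → ℝ) (t : ℝ) : phiVal x f t (Sum.inr 2) = bt t := rfl
lemma phiVal_z (f : V → ℝ) (t : ℝ) : phiVal x f t (Sum.inr 3) = zt t := rfl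

lemma phiVal_eV (f : V → ℝ) (t : ℝ) (v : V) : phiVal x f t (eV x v) = sg t * f v := by
  by_cases h : v = x
  · rw [eV_of_eq h, phiVal_y, h]
  · rw [eV_of_ne h, phiVal_inl]

/-- the south pole point `δ_z` -/
noncomputable def zVal (x : V) : ({v : V // v ≠ x} ⊕ Fin 4) → ℝ := fun w =>
  letI := Classical.dec (w = Sum.inr 3)
  if w = Sum.inr 3 then 1 else 0

/-- the north pole point `δ_b` -/
noncomputable def bVal (x : V) : ({v : V // v ≠ x} ⊕ Fin 4) → ℝ := fun w =>
  letI := Classical.dec (w = Sum.inr 2)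
  if w = Sum.inr 2 then 1 else 0

variable {G}

lemma zVal_mem : zVal x ∈ geomRealization (indComplex (Hg G x)) := by
  classical
  refine ⟨fun v => by unfold zVal; split_ifs <;> norm_num, {Sum.inr 3}, ?_, ?_, ?_⟩
  · intro a ha b hb
    simp only [Finset.mem_singleton] at ha hb
    subst ha; subst hb; exact (Hg G x).irrefl
  · intro v hv
    simp only [Finset.mem_singleton] at hv
    unfold zVal; split_ifs with h
    · exact absurd h hv
    · rfl
  · rw [Finset.sum_singleton]; unfold zVal; rw [if_pos rfl]

lemma bVal_mem : bVal x ∈ geomRealization (indComplex (Hg G x)) := by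
  classical
  refine ⟨fun v => by unfold bVal; split_ifs <;> norm_num, {Sum.inr 2}, ?_, ?_, ?_⟩
  · intro a ha b hb
    simp only [Finset.mem_singleton] at ha hb
    subst ha; subst hb; exact (Hg G x).irrefl
  · intro v hv
    simp only [Finset.mem_singleton] at hv
    unfold bVal; split_ifs with h
    · exact absurd h hv
    · rfl
  · rw [Finset.sum_singleton]; unfold bVal; rw [if_pos rfl]

lemma phiVal_zero (f : V → ℝ) : phiVal x f 0 = zVal x := by
  classical
  have hb : bt 0 = 0 := by unfold bt; norm_num
  have hz : zt 0 = 1 := by unfold zt; norm_num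
  have hs : sg 0 = 0 := by unfold sg; rw [hb, hz]; ring
  funext w
  rcases w with u | i
  · rw [phiVal_inl, hs, zero_mul]; unfold zVal; rw [if_neg (by simp)]
  · rcases fin4 i with rfl | rfl | rfl | rfl
    · rw [phiVal_y, hs, zero_mul]; unfold zVal; rw [if_neg (inr_ne (by decide))]
    · rw [phiVal_a]; unfold zVal; rw [if_neg (inr_ne (by decide))]
    · rw [phiVal_b, hb]; unfold zVal; rw [if_neg (inr_ne (by decide))]
    · rw [phiVal_z, hz]; unfold zVal; rw [if_pos rfl]

lemma phiVal_one (f : V → ℝ) : phiVal x f 1 = bVal x := by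
  classical
  have hb : bt 1 = 1 := by unfold bt; norm_num
  have hz : zt 1 = 0 := by unfold zt; norm_num
  have hs : sg 1 = 0 := by unfold sg; rw [hb, hz]; ring
  funext w
  rcases w with u | i
  · rw [phiVal_inl, hs, zero_mul]; unfold bVal; rw [if_neg (by simp)]
  · rcases fin4 i with rfl | rfl | rfl | rfl
    · rw [phiVal_y, hs, zero_mul]; unfold bVal; rw [if_neg (inr_ne (by decide))]
    · rw [phiVal_a]; unfold bVal; rw [if_neg (inr_ne (by decide))]
    · rw [phiVal_b, hb]; unfold bVal; rw [if_pos rfl]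
    · rw [phiVal_z, hz]; unfold bVal; rw [if_neg (inr_ne (by decide))]

lemma phiVal_mem {f : V → ℝ} (hf : f ∈ geomRealization (indComplex G)) {t : ℝ}
    (h0 : 0 ≤ t) (h1 : t ≤ 1) :
    phiVal x f t ∈ geomRealization (indComplex (Hg G x)) := by
  classical
  obtain ⟨hnn, s, hs, hvan, hsum⟩ := hf
  have hsg := sg_nonneg h0 h1
  set pol : ({v : V // v ≠ x} ⊕ Fin 4) := if 1/2 ≤ t then Sum.inr 2 else Sum.inr 3 with hpol
  refine ⟨?_, s.image (eV x) ∪ {pol}, ?_, ?_, ?_⟩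
  · -- nonneg
    intro w
    rcases w with u | i
    · exact mul_nonneg hsg (hnn _)
    · rcases fin4 i with rfl | rfl | rfl | rfl
      · rw [phiVal_y]; exact mul_nonneg hsg (hnn _)
      · rw [phiVal_a]
      · rw [phiVal_b]; exact bt_nonneg t
      · rw [phiVal_z]; exact zt_nonneg t
  · -- independence
    intro a ha b hb
    have hmem : ∀ w ∈ s.image (eV x) ∪ {pol},
        (∃ v ∈ s, eV x v = w) ∨ w = Sum.inr 2 ∨ w = Sum.inr 3 := by
      intro w hw
      rcases Finset.mem_union.1 hw with hw | hw
      · obtain ⟨v, hv, he⟩ := Finset.mem_image.1 hw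
        exact Or.inl ⟨v, hv, he⟩
      · right
        rw [Finset.mem_singleton] at hw
        subst hw
        rw [hpol]; split_ifs <;> simp
    have key : ∀ v ∈ s, ∀ v' ∈ s, ¬ (Hg G x).Adj (eV x v) (eV x v') := by
      intro v hv v' hv' hadj
      by_cases e1 : v = x <;> by_cases e2 : v' = x
      · rw [eV_of_eq e1, eV_of_eq e2] at hadj; exact (Hg G x).irrefl hadj
      · rw [eV_of_eq e1, eV_of_ne e2] at hadj
        subst e1
        exact hs v hv v' hv' (adj_l0.1 hadj.symm)
      · rw [eV_of_ne e1, eV_of_eq e2] at hadj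
        subst e2
        exact hs v' hv' v hv (adj_l0.1 hadj)
      · rw [eV_of_ne e1, eV_of_ne e2] at hadj
        exact hs v hv v' hv' (adj_ll.1 hadj)
    have keyz : ∀ v : V, ¬ (Hg G x).Adj (eV x v) (Sum.inr 2) ∧
        ¬ (Hg G x).Adj (eV x v) (Sum.inr 3) := by
      intro v
      by_cases h : v = x
      · rw [eV_of_eq h]; exact ⟨not_adj_02, not_adj_03⟩
      · rw [eV_of_ne h]; exact ⟨not_adj_l2, not_adj_l3⟩
    rcases hmem a ha with ⟨v, hv, he⟩ | hp <;> rcases hmem b hb with ⟨v', hv', he'⟩ | hp'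
    · subst he; subst he'; exact key v hv v' hv'
    · subst he
      rcases hp' with h | h <;> subst h
      · exact (keyz v).1
      · exact (keyz v).2
    · subst he'
      rcases hp with h | h <;> subst h
      · exact fun hadj => (keyz v').1 hadj.symm
      · exact fun hadj => (keyz v').2 hadj.symm
    · rcases hp with h | h <;> rcases hp' with h' | h' <;> subst h <;> subst h'
      · exact (Hg G x).irrefl
      · intro _
        have h2 : (Sum.inr 2 : {v : V // v ≠ x} ⊕ Fin 4) = pol := by
          rcases Finset.mem_union.1 ha with hw | hw
          · obtain ⟨v, _, he⟩ := Finset.mem_image.1 hw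
            exact absurd he (eV_ne_b)
          · exact (Finset.mem_singleton.1 hw)
        have h3 : (Sum.inr 3 : {v : V // v ≠ x} ⊕ Fin 4) = pol := by
          rcases Finset.mem_union.1 hb with hw | hw
          · obtain ⟨v, _, he⟩ := Finset.mem_image.1 hw
            exact absurd he (eV_ne_z)
          · exact (Finset.mem_singleton.1 hw)
        rw [← h3] at h2
        injection h2 with h2
        exact absurd h2 (by decide)
      · intro _
        have h2 : (Sum.inr 2 : {v : V // v ≠ x} ⊕ Fin 4) = pol := by
          rcases Finset.mem_union.1 hb with hw | hw
          · obtain ⟨v, _, he⟩ := Finset.mem_image.1 hw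
            exact absurd he (eV_ne_b)
          · exact (Finset.mem_singleton.1 hw)
        have h3 : (Sum.inr 3 : {v : V // v ≠ x} ⊕ Fin 4) = pol := by
          rcases Finset.mem_union.1 ha with hw | hw
          · obtain ⟨v, _, he⟩ := Finset.mem_image.1 hw
            exact absurd he (eV_ne_z)
          · exact (Finset.mem_singleton.1 hw)
        rw [← h3] at h2
        injection h2 with h2
        exact absurd h2 (by decide)
      · exact (Hg G x).irrefl
  · -- vanishing
    intro w hw
    have hnotim : ∀ v ∈ s, eV x v ≠ w := by
      intro v hv he
      exact hw (Finset.mem_union_left _ (Finset.mem_image.2 ⟨v, hv, he⟩))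
    have hnotpol : w ≠ pol := fun he =>
      hw (Finset.mem_union_right _ (Finset.mem_singleton.2 he))
    rcases w with u | i
    · rw [phiVal_inl]
      have : u.1 ∉ s := fun hu => hnotim u.1 hu (eV_of_ne u.2)
      rw [hvan _ this, mul_zero]
    · rcases fin4 i with rfl | rfl | rfl | rfl
      · rw [phiVal_y]
        have : x ∉ s := fun hu => hnotim x hu (eV_of_eq rfl)
        rw [hvan _ this, mul_zero]
      · exact phiVal_a f t
      · rw [phiVal_b]
        rw [hpol] at hnotpol
        have ht : ¬ (1/2 ≤ t) := by
          intro hle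
          exact hnotpol (by rw [if_pos hle])
        exact max_eq_right (by push_neg at ht; linarith)
      · rw [phiVal_z]
        rw [hpol] at hnotpol
        have ht : (1/2 ≤ t) := by
          by_contra hle
          exact hnotpol (by rw [if_neg hle])
        exact max_eq_right (by linarith)
  · -- sum
    have hdisj : Disjoint (s.image (eV x)) ({pol} : Finset _) := by
      rw [Finset.disjoint_singleton_right]
      intro hmem
      obtain ⟨v, _, he⟩ := Finset.mem_image.1 hmem
      rw [hpol] at he
      split_ifs at he
      · exact eV_ne_b he
      · exact eV_ne_z he
    rw [Finset.sum_union hdisj, Finset.sum_singleton,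
      Finset.sum_image (fun u _ v _ h => eV_inj h)]
    have himg : ∑ v ∈ s, phiVal x f t (eV x v) = sg t := by
      rw [Finset.sum_congr rfl (fun v _ => phiVal_eV f t v), ← Finset.mul_sum, hsum, mul_one]
    rw [himg, hpol]
    split_ifs with hle
    · rw [phiVal_b]
      have hz : zt t = 0 := max_eq_right (by linarith)
      unfold sg; rw [hz]; ring
    · rw [phiVal_z]
      have hb : bt t = 0 := max_eq_right (by push_neg at hle; linarith)
      unfold sg; rw [hb]; ring

end LozinMain

namespace LozinMain

open Finset LozinAux LozinAux2

variable {V : Type*} {G : SimpleGraph V} {x : V}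

abbrev Jr (G : SimpleGraph V) (x : V) := geomRealization (indComplex (Hg G x))
abbrev Xr (G : SimpleGraph V) := geomRealization (indComplex G)

def zz (h : ({v : V // v ≠ x} ⊕ Fin 4) → ℝ) : ℝ := h (Sum.inr 3) + h (Sum.inr 1)
def bb (h : ({v : V // v ≠ x} ⊕ Fin 4) → ℝ) : ℝ := h (Sum.inr 2)
def mm (h : ({v : V // v ≠ x} ⊕ Fin 4) → ℝ) : ℝ := zz h + bb h

noncomputable def Fv (x : V) (h : ({v : V // v ≠ x} ⊕ Fin 4) → ℝ) : V → ℝ :=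
  fun v => h (eV x v) / (1 - mm h)

variable {h : ({v : V // v ≠ x} ⊕ Fin 4) → ℝ}

lemma zz_nonneg (hh : h ∈ Jr G x) : 0 ≤ zz h := add_nonneg (hh.1 _) (hh.1 _)
lemma bb_nonneg (hh : h ∈ Jr G x) : 0 ≤ bb h := hh.1 _
lemma mm_nonneg (hh : h ∈ Jr G x) : 0 ≤ mm h := add_nonneg (zz_nonneg hh) (bb_nonneg hh)

lemma bb_eq_zero (hh : h ∈ Jr G x) (hz : zz h ≠ 0) : bb h = 0 := by
  by_contra hb
  have : h (Sum.inr 3) ≠ 0 ∨ h (Sum.inr 1) ≠ 0 := by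
    by_contra hc
    push_neg at hc
    exact hz (by unfold zz; rw [hc.1, hc.2]; ring)
  rcases this with h3 | h1
  · exact geom_pair hh hb h3 adj_23
  · exact geom_pair hh h1 hb adj_12

lemma zz_eq_zero (hh : h ∈ Jr G x) (hb : bb h ≠ 0) : zz h = 0 := by
  have h3 : h (Sum.inr 3) = 0 := by
    by_contra h3
    exact geom_pair hh hb h3 adj_23
  have h1 : h (Sum.inr 1) = 0 := by
    by_contra h1
    exact geom_pair hh h1 hb adj_12
  unfold zz; rw [h3, h1]; ring

lemma mm_lt_one (hh : h ∈ Jr G x) (hz : zz h < 3/4) (hb : bb h < 3/4) : mm h < 1 := by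
  by_cases hbz : bb h = 0
  · unfold mm; rw [hbz]; linarith
  · have := zz_eq_zero hh hbz
    unfold mm; rw [this]; linarith

lemma sum_P_filter [DecidablePred (fun w : ({v : V // v ≠ x} ⊕ Fin 4) =>
      w ≠ Sum.inr 1 ∧ w ≠ Sum.inr 2 ∧ w ≠ Sum.inr 3)] (hh : h ∈ Jr G x)
    {s : Finset ({v : V // v ≠ x} ⊕ Fin 4)}
    (hs : s ∈ (indComplex (Hg G x)).faces) (hvan : ∀ w ∉ s, h w = 0)
    (hsum : ∑ w ∈ s, h w = 1) :
    ∑ w ∈ s.filter (fun w => w ≠ Sum.inr 1 ∧ w ≠ Sum.inr 2 ∧ w ≠ Sum.inr 3), h w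
      = 1 - mm h := by
  classical
  have hsplit := Finset.sum_filter_add_sum_filter_not s
    (fun w => w ≠ Sum.inr 1 ∧ w ≠ Sum.inr 2 ∧ w ≠ Sum.inr 3) h
  have hsubT : s.filter (fun w => ¬ (w ≠ Sum.inr 1 ∧ w ≠ Sum.inr 2 ∧ w ≠ Sum.inr 3)) ⊆
      ({Sum.inr 1, Sum.inr 2, Sum.inr 3} : Finset ({v : V // v ≠ x} ⊕ Fin 4)) := by
    intro w hw
    rw [Finset.mem_filter] at hw
    by_cases h1 : w = Sum.inr 1
    · simp [h1]
    · by_cases h2 : w = Sum.inr 2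
      · simp [h2]
      · by_cases h3 : w = Sum.inr 3
        · simp [h3]
        · exact absurd ⟨h1, h2, h3⟩ hw.2
  have hTsum : ∑ w ∈ s.filter (fun w => ¬ (w ≠ Sum.inr 1 ∧ w ≠ Sum.inr 2 ∧ w ≠ Sum.inr 3)),
      h w = ∑ w ∈ ({Sum.inr 1, Sum.inr 2, Sum.inr 3} :
        Finset ({v : V // v ≠ x} ⊕ Fin 4)), h w := by
    refine Finset.sum_subset hsubT ?_
    intro w hwT hwn
    by_cases hws : w ∈ s
    · exfalso
      apply hwn
      rw [Finset.mem_filter]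
      refine ⟨hws, fun hPw => ?_⟩
      simp only [Finset.mem_insert, Finset.mem_singleton] at hwT
      rcases hwT with rfl | rfl | rfl
      · exact hPw.1 rfl
      · exact hPw.2.1 rfl
      · exact hPw.2.2 rfl
    · exact hvan w hws
  have hTval : ∑ w ∈ ({Sum.inr 1, Sum.inr 2, Sum.inr 3} :
      Finset ({v : V // v ≠ x} ⊕ Fin 4)), h w = mm h := by
    rw [Finset.sum_insert (by
      simp only [Finset.mem_insert, Finset.mem_singleton]
      push_neg
      exact ⟨inr_ne (by decide), inr_ne (by decide)⟩)]
    rw [Finset.sum_insert (by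
      simp only [Finset.mem_singleton]
      exact inr_ne (by decide))]
    rw [Finset.sum_singleton]
    unfold mm zz bb; ring
  rw [hTsum, hTval, hsum] at hsplit
  linarith [hsplit]

lemma Fv_mem (hh : h ∈ Jr G x) (hm : mm h < 1) : Fv x h ∈ Xr G := by
  classical
  obtain ⟨hnn, s, hs, hvan, hsum⟩ := hh
  have hh' : h ∈ Jr G x := ⟨hnn, s, hs, hvan, hsum⟩
  have hden : (0:ℝ) < 1 - mm h := by linarith
  have hPchar : ∀ w : ({v : V // v ≠ x} ⊕ Fin 4),
      (w ≠ Sum.inr 1 ∧ w ≠ Sum.inr 2 ∧ w ≠ Sum.inr 3) →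
      (∃ u : {v : V // v ≠ x}, w = Sum.inl u) ∨ w = Sum.inr 0 := by
    intro w hw
    rcases w with u | i
    · exact Or.inl ⟨u, rfl⟩
    · rcases fin4 i with rfl | rfl | rfl | rfl
      · exact Or.inr rfl
      · exact absurd rfl hw.1
      · exact absurd rfl hw.2.1
      · exact absurd rfl hw.2.2
  have heVpV : ∀ w : ({v : V // v ≠ x} ⊕ Fin 4),
      (w ≠ Sum.inr 1 ∧ w ≠ Sum.inr 2 ∧ w ≠ Sum.inr 3) →
      eV x (Sum.elim Subtype.val (fun _ => x) w) = w := by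
    intro w hw
    rcases hPchar w hw with ⟨u, rfl⟩ | rfl
    · exact eV_of_ne u.2
    · exact eV_of_eq rfl
  have hpVeV : ∀ v : V, Sum.elim Subtype.val (fun _ => x) (eV x v) = v := by
    intro v
    by_cases hv : v = x
    · rw [eV_of_eq hv]; exact hv.symm
    · rw [eV_of_ne hv]; rfl
  refine ⟨fun v => div_nonneg (hnn _) (le_of_lt hden),
    (s.filter (fun w => w ≠ Sum.inr 1 ∧ w ≠ Sum.inr 2 ∧ w ≠ Sum.inr 3)).image
      (Sum.elim Subtype.val (fun _ => x)), ?_, ?_, ?_⟩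
  · -- independence in G
    intro a ha b hb'
    obtain ⟨w1, hw1, he1⟩ := Finset.mem_image.1 ha
    obtain ⟨w2, hw2, he2⟩ := Finset.mem_image.1 hb'
    rw [Finset.mem_filter] at hw1 hw2
    subst he1; subst he2
    rcases hPchar w1 hw1.2 with ⟨u, rfl⟩ | rfl <;> rcases hPchar w2 hw2.2 with ⟨u', rfl⟩ | rfl
    · intro hadj
      exact hs _ hw1.1 _ hw2.1 (adj_ll.2 hadj)
    · intro hadj
      exact hs _ hw1.1 _ hw2.1 (adj_l0.2 hadj.symm)
    · intro hadj
      exact hs _ hw2.1 _ hw1.1 (adj_l0.2 hadj)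
    · intro hadj
      exact G.irrefl hadj
  · -- vanishing
    intro v hv
    unfold Fv
    have : h (eV x v) = 0 := by
      by_contra hc
      apply hv
      refine Finset.mem_image.2 ⟨eV x v, ?_, hpVeV v⟩
      rw [Finset.mem_filter]
      refine ⟨?_, eV_ne_a, eV_ne_b, eV_ne_z⟩
      by_contra hns
      exact hc (hvan _ hns)
    rw [this, zero_div]
  · -- sum
    have hinj : ∀ w1 ∈ s.filter (fun w => w ≠ Sum.inr 1 ∧ w ≠ Sum.inr 2 ∧ w ≠ Sum.inr 3),
        ∀ w2 ∈ s.filter (fun w => w ≠ Sum.inr 1 ∧ w ≠ Sum.inr 2 ∧ w ≠ Sum.inr 3),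
        Sum.elim Subtype.val (fun _ => x) w1 = Sum.elim Subtype.val (fun _ => x) w2 →
        w1 = w2 := by
      intro w1 hw1 w2 hw2 he
      rw [Finset.mem_filter] at hw1 hw2
      have e1 := heVpV w1 hw1.2
      have e2 := heVpV w2 hw2.2
      rw [← e1, ← e2, he]
    rw [Finset.sum_image hinj]
    have : ∀ w ∈ s.filter (fun w => w ≠ Sum.inr 1 ∧ w ≠ Sum.inr 2 ∧ w ≠ Sum.inr 3),
        Fv x h (Sum.elim Subtype.val (fun _ => x) w) = h w / (1 - mm h) := by
      intro w hw
      rw [Finset.mem_filter] at hw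
      unfold Fv
      rw [heVpV w hw.2]
    rw [Finset.sum_congr rfl this, ← Finset.sum_div, sum_P_filter hh' hs hvan hsum,
      div_self (ne_of_gt hden)]

end LozinMain

namespace LozinMain

open Finset LozinAux LozinAux2

variable {V : Type*} {G : SimpleGraph V} {x : V}

lemma susp_mk_false {X : Type*} [TopologicalSpace X] (f : X) (t : unitInterval)
    (ht : t = 0) :
    (Quot.mk (suspRel X) (Sum.inl (f, t)) : Susp X) = Quot.mk _ (Sum.inr false) :=
  Quot.sound (Or.inl ⟨ht, rfl⟩)

lemma susp_mk_true {X : Type*} [TopologicalSpace X] (f : X) (t : unitInterval)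
    (ht : t = 1) :
    (Quot.mk (suspRel X) (Sum.inl (f, t)) : Susp X) = Quot.mk _ (Sum.inr true) :=
  Quot.sound (Or.inr ⟨ht, rfl⟩)

lemma susp_mk_zero_eq {X : Type*} [TopologicalSpace X] (f g : X) (t u : unitInterval)
    (ht : t = 0) (hu : u = 0) :
    (Quot.mk (suspRel X) (Sum.inl (f, t)) : Susp X) = Quot.mk _ (Sum.inl (g, u)) :=
  Quot.sound (Or.inr (Or.inl ⟨ht, hu⟩))

lemma susp_mk_one_eq {X : Type*} [TopologicalSpace X] (f g : X) (t u : unitInterval)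
    (ht : t = 1) (hu : u = 1) :
    (Quot.mk (suspRel X) (Sum.inl (f, t)) : Susp X) = Quot.mk _ (Sum.inl (g, u)) :=
  Quot.sound (Or.inr (Or.inr ⟨ht, hu⟩))

variable (G) in
def PF : Susp ↥(Xr G) := Quot.mk _ (Sum.inr false)

variable (G) in
def PT : Susp ↥(Xr G) := Quot.mk _ (Sum.inr true)

noncomputable def th (h : ({v : V // v ≠ x} ⊕ Fin 4) → ℝ) : unitInterval :=
  Set.projIcc (0:ℝ) 1 zero_le_one (1/2 + bb h - zz h)

variable (G x) in
noncomputable def midF (h : ↥(Jr G x)) : Susp ↥(Xr G) :=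
  if hm : mm h.1 < 1 then
    Quot.mk _ (Sum.inl (⟨Fv x h.1, Fv_mem h.2 hm⟩, th h.1))
  else PF G

variable (G x) in
noncomputable def psiFun (h : ↥(Jr G x)) : Susp ↥(Xr G) :=
  if 1/2 ≤ zz h.1 then PF G
  else if 1/2 ≤ bb h.1 then PT G
  else midF G x h

lemma psiFun_of_zz {h : ↥(Jr G x)} (hz : 1/2 ≤ zz h.1) : psiFun G x h = PF G := by
  unfold psiFun; rw [if_pos hz]

lemma psiFun_of_bb {h : ↥(Jr G x)} (hz : ¬ 1/2 ≤ zz h.1) (hb : 1/2 ≤ bb h.1) :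
    psiFun G x h = PT G := by
  unfold psiFun; rw [if_neg hz, if_pos hb]

lemma psiFun_of_mid {h : ↥(Jr G x)} (hz : ¬ 1/2 ≤ zz h.1) (hb : ¬ 1/2 ≤ bb h.1) :
    psiFun G x h = midF G x h := by
  unfold psiFun; rw [if_neg hz, if_neg hb]

lemma midF_eq {h : ↥(Jr G x)} (hm : mm h.1 < 1) :
    midF G x h = Quot.mk _ (Sum.inl (⟨Fv x h.1, Fv_mem h.2 hm⟩, th h.1)) := by
  unfold midF; exact dif_pos hm

lemma th_eq_zero {h : ({v : V // v ≠ x} ⊕ Fin 4) → ℝ} (hr : 1/2 + bb h - zz h ≤ 0) :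
    th h = 0 := by
  unfold th
  rw [Set.projIcc_of_le_left _ hr]
  rfl

lemma th_eq_one {h : ({v : V // v ≠ x} ⊕ Fin 4) → ℝ} (hr : 1 ≤ 1/2 + bb h - zz h) :
    th h = 1 := by
  unfold th
  rw [Set.projIcc_of_right_le _ hr]
  rfl

/-- On the region `zz < 3/4 ∧ bb < 3/4`, `psiFun` agrees with `midF`. -/
lemma psiFun_eq_midF_on {h : ↥(Jr G x)} (hz : zz h.1 < 3/4) (hb : bb h.1 < 3/4) :
    psiFun G x h = midF G x h := by
  have hm : mm h.1 < 1 := mm_lt_one h.2 hz hb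
  by_cases h1 : 1/2 ≤ zz h.1
  · rw [psiFun_of_zz h1, midF_eq hm]
    have hbz : bb h.1 = 0 := bb_eq_zero h.2 (by intro hc; rw [hc] at h1; linarith)
    have h0 : th h.1 = 0 := th_eq_zero (by rw [hbz]; linarith)
    exact (susp_mk_false _ _ h0).symm
  · by_cases h2 : 1/2 ≤ bb h.1
    · rw [psiFun_of_bb h1 h2, midF_eq hm]
      have hzz : zz h.1 = 0 := zz_eq_zero h.2 (by intro hc; rw [hc] at h2; linarith)
      have h0 : th h.1 = 1 := th_eq_one (by rw [hzz]; linarith)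
      exact (susp_mk_true _ _ h0).symm
    · exact psiFun_of_mid h1 h2

lemma continuous_coord (w : {v : V // v ≠ x} ⊕ Fin 4) :
    Continuous (fun h : ↥(Jr G x) => h.1 w) :=
  (continuous_apply w).comp continuous_subtype_val

lemma continuous_zz : Continuous (fun h : ↥(Jr G x) => zz h.1) :=
  (continuous_coord _).add (continuous_coord _)

lemma continuous_bb : Continuous (fun h : ↥(Jr G x) => bb h.1) :=
  continuous_coord _

lemma continuous_mm : Continuous (fun h : ↥(Jr G x) => mm h.1) :=
  continuous_zz.add continuous_bb

variable (G x) in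
lemma psi_continuous : Continuous (psiFun G x) := by
  rw [continuous_iff_continuousAt]
  intro h₀
  by_cases hz : 1/2 < zz h₀.1
  · have hU : IsOpen {h : ↥(Jr G x) | 1/2 < zz h.1} :=
      isOpen_lt continuous_const continuous_zz
    refine Filter.EventuallyEq.continuousAt (y := PF G) ?_
    refine Filter.eventually_of_mem (hU.mem_nhds hz) ?_
    intro h hh
    exact psiFun_of_zz (le_of_lt hh)
  · by_cases hb : 1/2 < bb h₀.1
    · have hU : IsOpen {h : ↥(Jr G x) | 1/2 < bb h.1} :=
        isOpen_lt continuous_const continuous_bb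
      refine Filter.EventuallyEq.continuousAt (y := PT G) ?_
      refine Filter.eventually_of_mem (hU.mem_nhds hb) ?_
      intro h hh
      simp only [Set.mem_setOf_eq] at hh
      have hzz : zz h.1 = 0 := zz_eq_zero h.2 (by intro hc; rw [hc] at hh; linarith)
      exact psiFun_of_bb (by rw [hzz]; norm_num) (le_of_lt hh)
    · push_neg at hz hb
      set U : Set ↥(Jr G x) := {h | zz h.1 < 3/4 ∧ bb h.1 < 3/4} with hUdef
      have hUopen : IsOpen U :=
        (isOpen_lt continuous_zz continuous_const).inter
          (isOpen_lt continuous_bb continuous_const)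
      have hmemU : h₀ ∈ U := ⟨by linarith, by linarith⟩
      have hcont : ContinuousOn (midF G x) U := by
        rw [continuousOn_iff_continuous_restrict]
        have hres : U.domRestrict (midF G x) = fun p : ↥U =>
            Quot.mk _ (Sum.inl
              ((⟨Fv x p.1.1, Fv_mem p.1.2 (mm_lt_one p.1.2 p.2.1 p.2.2)⟩ : ↥(Xr G)),
                th p.1.1)) := by
          funext p
          have hm : mm p.1.1 < 1 := mm_lt_one p.1.2 p.2.1 p.2.2
          show midF G x p.1 = _
          rw [midF_eq hm]
        rw [hres]
        refine continuous_quot_mk.comp (continuous_inl.comp (Continuous.prodMk ?_ ?_))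
        · refine Continuous.subtype_mk ?_ _
          refine continuous_pi ?_
          intro v
          refine Continuous.div ?_ ?_ ?_
          · exact (continuous_apply (eV x v)).comp
              (continuous_subtype_val.comp continuous_subtype_val)
          · exact continuous_const.sub (continuous_mm.comp continuous_subtype_val)
          · intro p
            have hm : mm p.1.1 < 1 := mm_lt_one p.1.2 p.2.1 p.2.2
            intro hc
            rw [sub_eq_zero] at hc
            rw [← hc] at hm
            exact lt_irrefl _ hm
        · unfold th
          exact continuous_projIcc.comp
            ((continuous_const.add (continuous_bb.comp continuous_subtype_val)).sub
              (continuous_zz.comp continuous_subtype_val))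
      have hCA : ContinuousAt (midF G x) h₀ :=
        hcont.continuousAt (hUopen.mem_nhds hmemU)
      refine hCA.congr ?_
      refine Filter.eventually_of_mem (hUopen.mem_nhds hmemU) ?_
      intro h hh
      exact (psiFun_eq_midF_on hh.1 hh.2).symm

end LozinMain

namespace LozinMain

open Finset LozinAux LozinAux2

variable {V : Type*} {G : SimpleGraph V} {x : V}

variable (G x) in
noncomputable def phiJ (p : ↥(Xr G) × unitInterval ⊕ Bool) : ↥(Jr G x) :=
  Sum.elim
    (fun ft => ⟨phiVal x ft.1.1 ft.2.1, phiVal_mem ft.1.2 ft.2.2.1 ft.2.2.2⟩)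
    (fun i => if i then ⟨bVal x, bVal_mem⟩ else ⟨zVal x, zVal_mem⟩) p

lemma coeI_eq_zero {t : unitInterval} (ht : t = 0) : (t : ℝ) = 0 := by rw [ht]; rfl
lemma coeI_eq_one {t : unitInterval} (ht : t = 1) : (t : ℝ) = 1 := by rw [ht]; rfl

variable (G x) in
lemma phiJ_wd : ∀ p q, suspRel (↥(Xr G)) p q → phiJ G x p = phiJ G x q := by
  rintro (⟨f, t⟩ | i) (⟨g, u⟩ | j) hrel
  · rcases hrel with heq | ⟨ht, hu⟩ | ⟨ht, hu⟩
    · rw [heq]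
    · apply Subtype.ext
      show phiVal x f.1 t.1 = phiVal x g.1 u.1
      rw [coeI_eq_zero ht, coeI_eq_zero hu, phiVal_zero, phiVal_zero]
    · apply Subtype.ext
      show phiVal x f.1 t.1 = phiVal x g.1 u.1
      rw [coeI_eq_one ht, coeI_eq_one hu, phiVal_one, phiVal_one]
  · rcases hrel with ⟨ht, hj⟩ | ⟨ht, hj⟩ <;> subst hj
    · apply Subtype.ext
      show phiVal x f.1 t.1 = zVal x
      rw [coeI_eq_zero ht, phiVal_zero]
    · apply Subtype.ext
      show phiVal x f.1 t.1 = bVal x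
      rw [coeI_eq_one ht, phiVal_one]
  · rcases hrel with ⟨ht, hj⟩ | ⟨ht, hj⟩ <;> subst hj
    · apply Subtype.ext
      show zVal x = phiVal x g.1 u.1
      rw [coeI_eq_zero ht, phiVal_zero]
    · apply Subtype.ext
      show bVal x = phiVal x g.1 u.1
      rw [coeI_eq_one ht, phiVal_one]
  · rw [hrel]

lemma continuous_bt : Continuous bt :=
  ((continuous_const.mul continuous_id).sub continuous_const).max continuous_const

lemma continuous_zt : Continuous zt :=
  (continuous_const.sub (continuous_const.mul continuous_id)).max continuous_const

lemma continuous_sg : Continuous sg :=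
  (continuous_const.sub continuous_bt).sub continuous_zt

variable (G x) in
lemma phiJ_cont : Continuous (phiJ G x) := by
  refine Continuous.sumElim ?_ continuous_of_discreteTopology
  refine Continuous.subtype_mk ?_ _
  refine continuous_pi ?_
  intro w
  have hT : Continuous (fun ft : ↥(Xr G) × unitInterval => (ft.2 : ℝ)) :=
    continuous_subtype_val.comp continuous_snd
  rcases w with v | i
  · show Continuous fun ft : ↥(Xr G) × unitInterval => sg (ft.2 : ℝ) * ft.1.1 v.1
    exact (continuous_sg.comp hT).mul
      ((continuous_apply v.1).comp (continuous_subtype_val.comp continuous_fst))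
  · rcases fin4 i with rfl | rfl | rfl | rfl
    · show Continuous fun ft : ↥(Xr G) × unitInterval => sg (ft.2 : ℝ) * ft.1.1 x
      exact (continuous_sg.comp hT).mul
        ((continuous_apply x).comp (continuous_subtype_val.comp continuous_fst))
    · show Continuous fun ft : ↥(Xr G) × unitInterval => (0:ℝ)
      exact continuous_const
    · show Continuous fun ft : ↥(Xr G) × unitInterval => bt (ft.2 : ℝ)
      exact continuous_bt.comp hT
    · show Continuous fun ft : ↥(Xr G) × unitInterval => zt (ft.2 : ℝ)
      exact continuous_zt.comp hT

variable (G x) in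
noncomputable def phiC : C(Susp ↥(Xr G), ↥(Jr G x)) :=
  ⟨Quot.lift (phiJ G x) (phiJ_wd G x), continuous_quot_lift _ (phiJ_cont G x)⟩

variable (G x) in
noncomputable def psiC : C(↥(Jr G x), Susp ↥(Xr G)) :=
  ⟨psiFun G x, psi_continuous G x⟩

end LozinMain

namespace LozinMain

open Finset LozinAux LozinAux2

variable {V : Type*} {G : SimpleGraph V} {x : V}

noncomputable def rhoc (t : ℝ) : ℝ := min 1 (max 0 (2*t - 1/2))

lemma continuous_rhoc : Continuous rhoc :=
  continuous_const.min (continuous_const.max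
    ((continuous_const.mul continuous_id).sub continuous_const))

noncomputable def mixI (s t : unitInterval) : unitInterval :=
  Set.projIcc (0:ℝ) 1 zero_le_one ((1 - s.1) * rhoc t.1 + s.1 * t.1)

lemma rhoc_of_zero {t : ℝ} (ht : t ≤ 1/4) : rhoc t = 0 := by
  unfold rhoc
  rw [max_eq_left (by linarith), min_eq_right (by norm_num)]

lemma rhoc_of_one {t : ℝ} (ht : 3/4 ≤ t) : rhoc t = 1 := by
  unfold rhoc
  rw [min_eq_left]
  exact le_max_of_le_right (by linarith)

lemma mixI_of_t_zero {s t : unitInterval} (ht : t = 0) : mixI s t = 0 := by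
  subst ht
  unfold mixI
  have : (1 - s.1) * rhoc (0:unitInterval).1 + s.1 * (0:unitInterval).1 = 0 := by
    have h0 : ((0:unitInterval) : ℝ) = 0 := rfl
    rw [h0, rhoc_of_zero (by norm_num)]
    ring
  rw [this, Set.projIcc_of_mem _ (by constructor <;> norm_num)]
  rfl

lemma mixI_of_t_one {s t : unitInterval} (ht : t = 1) : mixI s t = 1 := by
  subst ht
  unfold mixI
  have h1 : ((1:unitInterval) : ℝ) = 1 := rfl
  have : (1 - s.1) * rhoc (1:unitInterval).1 + s.1 * (1:unitInterval).1 = 1 := by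
    rw [h1, rhoc_of_one (by norm_num)]
    ring
  rw [this, Set.projIcc_of_mem _ (by constructor <;> norm_num)]
  rfl

lemma mixI_one_left (t : unitInterval) : mixI 1 t = t := by
  unfold mixI
  have h1 : ((1:unitInterval) : ℝ) = 1 := rfl
  have : (1 - (1:unitInterval).1) * rhoc t.1 + (1:unitInterval).1 * t.1 = t.1 := by
    rw [h1]; ring
  rw [this, Set.projIcc_of_mem _ t.2]

variable (G) in
noncomputable def bigRaw : ((↥(Xr G) × unitInterval ⊕ Bool) × unitInterval) → Susp ↥(Xr G) :=
  (Sum.elim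
    (fun q : (↥(Xr G) × unitInterval) × unitInterval =>
      Quot.mk (suspRel ↥(Xr G)) (Sum.inl (q.1.1, mixI q.2 q.1.2)))
    (fun q : Bool × unitInterval => if q.1 then PT G else PF G)) ∘
    (Homeomorph.sumProdDistrib (X := ↥(Xr G) × unitInterval) (Y := Bool) (Z := unitInterval))

lemma bigRaw_inl (f : ↥(Xr G)) (t s : unitInterval) :
    bigRaw G ((Sum.inl (f, t)), s) = Quot.mk _ (Sum.inl (f, mixI s t)) := by
  simp [bigRaw]; rfl

lemma bigRaw_inr (i : Bool) (s : unitInterval) :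
    bigRaw G ((Sum.inr i), s) = if i then PT G else PF G := by
  simp [bigRaw]; rfl

variable (G) in
lemma bigRaw_cont : Continuous (bigRaw G) := by
  refine Continuous.comp ?_ (Homeomorph.continuous _)
  refine Continuous.sumElim ?_ ?_
  · refine continuous_quot_mk.comp (continuous_inl.comp (Continuous.prodMk ?_ ?_))
    · exact continuous_fst.fst
    · unfold mixI
      refine continuous_projIcc.comp ?_
      have hs : Continuous (fun q : (↥(Xr G) × unitInterval) × unitInterval => (q.2 : ℝ)) :=
        continuous_subtype_val.comp continuous_snd
      have ht : Continuous (fun q : (↥(Xr G) × unitInterval) × unitInterval => (q.1.2 : ℝ)) :=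
        continuous_subtype_val.comp (continuous_snd.comp continuous_fst)
      exact ((continuous_const.sub hs).mul (continuous_rhoc.comp ht)).add (hs.mul ht)
  · exact (continuous_of_discreteTopology
      (f := fun i : Bool => if i then PT G else PF G)).comp continuous_fst

variable (G) in
noncomputable def bigC : C((↥(Xr G) × unitInterval ⊕ Bool) × unitInterval, Susp ↥(Xr G)) :=
  ⟨bigRaw G, bigRaw_cont G⟩

variable (G) in
noncomputable def curried : C(↥(Xr G) × unitInterval ⊕ Bool, C(unitInterval, Susp ↥(Xr G))) :=
  ContinuousMap.curry (bigC G)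

variable (G) in
lemma curried_wd : ∀ p q, suspRel (↥(Xr G)) p q → curried G p = curried G q := by
  have hcur : ∀ p s, curried G p s = bigRaw G (p, s) := fun p s => rfl
  rintro (⟨f, t⟩ | i) (⟨g, u⟩ | j) hrel <;> apply ContinuousMap.ext <;> intro s
  · rcases hrel with heq | ⟨ht, hu⟩ | ⟨ht, hu⟩
    · rw [heq]
    · rw [hcur, hcur, bigRaw_inl, bigRaw_inl]
      exact susp_mk_zero_eq _ _ _ _ (mixI_of_t_zero ht) (mixI_of_t_zero hu)
    · rw [hcur, hcur, bigRaw_inl, bigRaw_inl]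
      exact susp_mk_one_eq _ _ _ _ (mixI_of_t_one ht) (mixI_of_t_one hu)
  · rcases hrel with ⟨ht, hj⟩ | ⟨ht, hj⟩ <;> subst hj
    · rw [hcur, hcur, bigRaw_inl, bigRaw_inr]
      exact susp_mk_false _ _ (mixI_of_t_zero ht)
    · rw [hcur, hcur, bigRaw_inl, bigRaw_inr]
      exact susp_mk_true _ _ (mixI_of_t_one ht)
  · rcases hrel with ⟨ht, hj⟩ | ⟨ht, hj⟩ <;> subst hj
    · rw [hcur, hcur, bigRaw_inl, bigRaw_inr]
      exact (susp_mk_false _ _ (mixI_of_t_zero ht)).symm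
    · rw [hcur, hcur, bigRaw_inl, bigRaw_inr]
      exact (susp_mk_true _ _ (mixI_of_t_one ht)).symm
  · rw [hrel]

variable (G) in
noncomputable def GG : C(Susp ↥(Xr G), C(unitInterval, Susp ↥(Xr G))) :=
  ⟨Quot.lift (fun p => curried G p) (curried_wd G),
    continuous_quot_lift _ (curried G).continuous⟩

variable (G) in
noncomputable def HH : C(Susp ↥(Xr G) × unitInterval, Susp ↥(Xr G)) :=
  ContinuousMap.uncurry (GG G)

lemma HH_mk (p : ↥(Xr G) × unitInterval ⊕ Bool) (s : unitInterval) :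
    HH G (Quot.mk _ p, s) = bigRaw G (p, s) := by
  have h1 : HH G (Quot.mk _ p, s) = GG G (Quot.mk _ p) s := rfl
  have h2 : GG G (Quot.mk (suspRel ↥(Xr G)) p) = curried G p := rfl
  have h3 : curried G p s = bigC G (p, s) := rfl
  rw [h1, h2, h3]
  rfl

-- coordinates of phiVal under zz/bb/mm
lemma zz_phi (f : V → ℝ) (t : ℝ) : zz (phiVal x f t) = zt t := by
  unfold zz
  rw [phiVal_z, phiVal_a, add_zero]

lemma bb_phi (f : V → ℝ) (t : ℝ) : bb (phiVal x f t) = bt t := by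
  unfold bb
  rw [phiVal_b]

lemma mm_phi (f : V → ℝ) (t : ℝ) : mm (phiVal x f t) = bt t + zt t := by
  unfold mm
  rw [zz_phi, bb_phi]; ring

lemma zz_zVal : zz (zVal x) = 1 := by
  unfold zz zVal
  rw [if_pos rfl, if_neg (inr_ne (by decide))]
  ring

lemma zz_bVal : zz (bVal x) = 0 := by
  unfold zz bVal
  rw [if_neg (inr_ne (by decide)), if_neg (inr_ne (by decide))]
  ring

lemma bb_bVal : bb (bVal x) = 1 := by
  unfold bb bVal
  rw [if_pos rfl]

-- The key compatibility: `ψ ∘ φ` at time `0` of the homotopy.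
variable (G x) in
lemma HH_zero (q : Susp ↥(Xr G)) : HH G (q, 0) = psiC G x (phiC G x q) := by
  refine Quot.ind (β := fun p => HH G (p, 0) = psiC G x (phiC G x p)) ?_ q
  rintro (⟨f, t⟩ | i)
  · rw [HH_mk, bigRaw_inl]
    have hphi : phiC G x (Quot.mk _ (Sum.inl (f, t))) =
        ⟨phiVal x f.1 t.1, phiVal_mem f.2 t.2.1 t.2.2⟩ := rfl
    rw [hphi]
    show Quot.mk _ (Sum.inl (f, mixI 0 t)) =
      psiFun G x ⟨phiVal x f.1 t.1, phiVal_mem f.2 t.2.1 t.2.2⟩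
    have hmix : mixI 0 t = Set.projIcc (0:ℝ) 1 zero_le_one (rhoc t.1) := by
      unfold mixI
      congr 1
      have h0 : ((0:unitInterval) : ℝ) = 0 := rfl
      rw [h0]; ring
    by_cases hA : 1/2 ≤ zz (phiVal x f.1 t.1)
    · rw [psiFun_of_zz hA]
      rw [zz_phi] at hA
      have hzt : 1/2 ≤ 1 - 2*t.1 := by
        rcases le_max_iff.1 hA with h | h
        · exact h
        · linarith
      have : mixI 0 t = 0 := by
        rw [hmix, rhoc_of_zero (by linarith), Set.projIcc_of_mem _ (by constructor <;> norm_num)]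
        rfl
      rw [this]
      exact susp_mk_false _ _ rfl
    · by_cases hB : 1/2 ≤ bb (phiVal x f.1 t.1)
      · rw [psiFun_of_bb hA hB]
        rw [bb_phi] at hB
        have hbt : 1/2 ≤ 2*t.1 - 1 := by
          rcases le_max_iff.1 hB with h | h
          · exact h
          · linarith
        have : mixI 0 t = 1 := by
          rw [hmix, rhoc_of_one (by linarith), Set.projIcc_of_mem _ (by constructor <;> norm_num)]
          rfl
        rw [this]
        exact susp_mk_true _ _ rfl
      · -- middle region
        rw [zz_phi] at hA
        rw [bb_phi] at hB
        push_neg at hA hB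
        have hztlt : zt t.1 < 1/2 := hA
        have hbtlt : bt t.1 < 1/2 := hB
        have hm : mm (phiVal x f.1 t.1) < 1 := by
          rw [mm_phi]; linarith
        rw [psiFun_of_mid (by rw [zz_phi]; exact not_le.2 hA) (by rw [bb_phi]; exact not_le.2 hB),
          midF_eq hm]
        have hsgpos : (0:ℝ) < sg t.1 := by
          unfold sg; linarith
        have hsg_eq : sg t.1 = 1 - mm (phiVal x f.1 t.1) := by
          rw [mm_phi]; unfold sg; ring
        have e1 : (⟨Fv x (phiVal x f.1 t.1), Fv_mem (phiVal_mem f.2 t.2.1 t.2.2) hm⟩ : ↥(Xr G))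
            = f := by
          apply Subtype.ext
          funext v
          show phiVal x f.1 t.1 (eV x v) / (1 - mm (phiVal x f.1 t.1)) = f.1 v
          rw [phiVal_eV, ← hsg_eq]
          exact mul_div_cancel_left₀ _ (ne_of_gt hsgpos)
        have e2 : th (phiVal x f.1 t.1) = mixI 0 t := by
          rw [hmix]
          unfold th
          congr 1
          rw [bb_phi, zz_phi]
          have harg : 1/2 + bt t.1 - zt t.1 = 2*t.1 - 1/2 := by
            have := bt_sub_zt t.1
            linarith
          rw [harg]
          unfold rhoc
          rw [max_eq_right ?hmax, min_eq_right ?hmin]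
          case hmax =>
            have : 1 - 2*t.1 < 1/2 := lt_of_le_of_lt (le_max_left _ _) hztlt
            linarith
          case hmin =>
            have : 2*t.1 - 1 < 1/2 := lt_of_le_of_lt (le_max_left _ _) hbtlt
            linarith
        rw [e1, e2]
  · rw [HH_mk, bigRaw_inr]
    cases i
    · show PF G = psiC G x (phiC G x (Quot.mk _ (Sum.inr false)))
      have hphi : phiC G x (Quot.mk _ (Sum.inr false)) = ⟨zVal x, zVal_mem⟩ := rfl
      rw [hphi]
      exact (psiFun_of_zz (by rw [zz_zVal]; norm_num)).symm
    · show PT G = psiC G x (phiC G x (Quot.mk _ (Sum.inr true)))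
      have hphi : phiC G x (Quot.mk _ (Sum.inr true)) = ⟨bVal x, bVal_mem⟩ := rfl
      rw [hphi]
      exact (psiFun_of_bb (by rw [zz_bVal]; norm_num) (by rw [bb_bVal]; norm_num)).symm

variable (G) in
lemma HH_one (q : Susp ↥(Xr G)) : HH G (q, 1) = q := by
  refine Quot.ind (β := fun p => HH G (p, 1) = p) ?_ q
  rintro (⟨f, t⟩ | i)
  · rw [HH_mk, bigRaw_inl, mixI_one_left]
  · rw [HH_mk, bigRaw_inr]
    cases i
    · rfl
    · rfl

variable (G x) in
noncomputable def rightHomotopy :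
    ContinuousMap.Homotopy ((psiC G x).comp (phiC G x)) (ContinuousMap.id _) where
  toFun := fun p => HH G (p.2, p.1)
  continuous_toFun := (HH G).continuous.comp (continuous_snd.prodMk continuous_fst)
  map_zero_left := fun q => HH_zero G x q
  map_one_left := fun q => HH_one G q

end LozinMain

namespace LozinMain

open Finset LozinAux LozinAux2

variable {V : Type*} {G : SimpleGraph V} {x : V}

lemma line_mem {h k : ({v : V // v ≠ x} ⊕ Fin 4) → ℝ} (hh : h ∈ Jr G x) (hk : k ∈ Jr G x)
    (hsupp : ∀ w, k w ≠ 0 → (h w ≠ 0 ∨ (w = Sum.inr 3 ∧ h (Sum.inr 2) = 0)))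
    {c d : ℝ} (hc : 0 ≤ c) (hd : 0 ≤ d) (hcd : c + d = 1) :
    (fun w => c * h w + d * k w) ∈ Jr G x := by
  classical
  have hnn := hh.1
  have hknn := hk.1
  obtain ⟨-, s, hs, hvan, hsum⟩ := hh
  have hh' : h ∈ Jr G x := ⟨hnn, s, hs, hvan, hsum⟩
  by_cases hb : h (Sum.inr 2) = 0
  · -- we may add the vertex z
    set S : Finset ({v : V // v ≠ x} ⊕ Fin 4) :=
      s.filter (fun w => h w ≠ 0) ∪ {Sum.inr 3} with hS
    have hvanS_h : ∀ w ∉ S, h w = 0 := by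
      intro w hw
      have : w ∉ s.filter (fun w => h w ≠ 0) := fun hc' => hw (Finset.mem_union_left _ hc')
      by_cases hws : w ∈ s
      · by_contra hne
        exact this (Finset.mem_filter.2 ⟨hws, hne⟩)
      · exact hvan w hws
    have hvanS_k : ∀ w ∉ S, k w = 0 := by
      intro w hw
      by_contra hne
      rcases hsupp w hne with hne' | ⟨rfl, -⟩
      · have hws : w ∈ s := by
          by_contra hws
          exact hne' (hvan w hws)
        exact hw (Finset.mem_union_left _ (Finset.mem_filter.2 ⟨hws, hne'⟩))
      · exact hw (Finset.mem_union_right _ (Finset.mem_singleton.2 rfl))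
    refine ⟨fun w => add_nonneg (mul_nonneg hc (hnn w)) (mul_nonneg hd (hknn w)), S, ?_, ?_, ?_⟩
    · -- independence
      intro a ha b hb'
      have hchar : ∀ w ∈ S, (w ∈ s ∧ h w ≠ 0) ∨ w = Sum.inr 3 := by
        intro w hw
        rcases Finset.mem_union.1 hw with hw | hw
        · exact Or.inl (Finset.mem_filter.1 hw)
        · exact Or.inr (Finset.mem_singleton.1 hw)
      rcases hchar a ha with ⟨has, hane⟩ | rfl <;> rcases hchar b hb' with ⟨hbs, hbne⟩ | rfl
      · exact hs a has b hbs
      · intro hadj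
        have : a = Sum.inr 2 := adj_z_iff.1 hadj
        rw [this] at hane
        exact hane hb
      · intro hadj
        have : b = Sum.inr 2 := adj_z_iff.1 hadj.symm
        rw [this] at hbne
        exact hbne hb
      · exact (Hg G x).irrefl
    · intro w hw
      show c * h w + d * k w = 0
      rw [hvanS_h w hw, hvanS_k w hw]; ring
    · rw [Finset.sum_add_distrib, ← Finset.mul_sum, ← Finset.mul_sum,
        geom_sum_eq_one hh' hvanS_h, geom_sum_eq_one hk hvanS_k, mul_one, mul_one, hcd]
  · -- b has positive mass; stay inside supp h
    set S : Finset ({v : V // v ≠ x} ⊕ Fin 4) := s.filter (fun w => h w ≠ 0) with hS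
    have hvanS_h : ∀ w ∉ S, h w = 0 := by
      intro w hw
      by_cases hws : w ∈ s
      · by_contra hne
        exact hw (Finset.mem_filter.2 ⟨hws, hne⟩)
      · exact hvan w hws
    have hvanS_k : ∀ w ∉ S, k w = 0 := by
      intro w hw
      by_contra hne
      rcases hsupp w hne with hne' | ⟨-, hb0⟩
      · have hws : w ∈ s := by
          by_contra hws
          exact hne' (hvan w hws)
        exact hw (Finset.mem_filter.2 ⟨hws, hne'⟩)
      · exact hb hb0
    refine ⟨fun w => add_nonneg (mul_nonneg hc (hnn w)) (mul_nonneg hd (hknn w)), S, ?_, ?_, ?_⟩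
    · intro a ha b hb'
      exact hs a (Finset.mem_of_mem_filter a ha) b (Finset.mem_of_mem_filter b hb')
    · intro w hw
      show c * h w + d * k w = 0
      rw [hvanS_h w hw, hvanS_k w hw]; ring
    · rw [Finset.sum_add_distrib, ← Finset.mul_sum, ← Finset.mul_sum,
        geom_sum_eq_one hh' hvanS_h, geom_sum_eq_one hk hvanS_k, mul_one, mul_one, hcd]

lemma zVal_ne {w : {v : V // v ≠ x} ⊕ Fin 4} (hne : zVal x w ≠ 0) : w = Sum.inr 3 := by
  by_contra hc
  apply hne
  unfold zVal
  rw [if_neg hc]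

lemma bVal_ne {w : {v : V // v ≠ x} ⊕ Fin 4} (hne : bVal x w ≠ 0) : w = Sum.inr 2 := by
  by_contra hc
  apply hne
  unfold bVal
  rw [if_neg hc]

lemma th_coe (h : ({v : V // v ≠ x} ⊕ Fin 4) → ℝ) :
    ((th h : unitInterval) : ℝ) = max 0 (min 1 (1/2 + bb h - zz h)) := by
  unfold th
  rw [Set.coe_projIcc]

variable (G x) in
lemma phipsi_supp (h : ↥(Jr G x)) :
    ∀ w, ((phiC G x) ((psiC G x) h)).1 w ≠ 0 →
      (h.1 w ≠ 0 ∨ (w = Sum.inr 3 ∧ h.1 (Sum.inr 2) = 0)) := by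
  intro w hne
  by_cases hz : 1/2 ≤ zz h.1
  · -- ψ h = PF, φψ h = zVal
    have hpsi : psiC G x h = PF G := psiFun_of_zz hz
    have hk : ((phiC G x) ((psiC G x) h)).1 = zVal x := by
      rw [hpsi]
      have e1 : (phiC G x) (PF G) = phiJ G x (Sum.inr false) := rfl
      have e2 : phiJ G x (Sum.inr false) = ⟨zVal x, zVal_mem⟩ := rfl
      rw [e1, e2]
    rw [hk] at hne
    have hw3 := zVal_ne hne
    have hbz : bb h.1 = 0 := bb_eq_zero h.2 (by intro hc; rw [hc] at hz; linarith)
    exact Or.inr ⟨hw3, hbz⟩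
  · by_cases hbge : 1/2 ≤ bb h.1
    · have hpsi : psiC G x h = PT G := psiFun_of_bb hz hbge
      have hk : ((phiC G x) ((psiC G x) h)).1 = bVal x := by
        rw [hpsi]
        have e1 : (phiC G x) (PT G) = phiJ G x (Sum.inr true) := rfl
        have e2 : phiJ G x (Sum.inr true) = ⟨bVal x, bVal_mem⟩ := rfl
        rw [e1, e2]
      rw [hk] at hne
      have hw2 := bVal_ne hne
      refine Or.inl ?_
      rw [hw2]
      intro hc
      unfold bb at hbge
      rw [hc] at hbge
      linarith
    · -- middle
      push_neg at hz hbge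
      have hm : mm h.1 < 1 := mm_lt_one h.2 (by linarith) (by linarith)
      have hpsi : psiC G x h =
          Quot.mk _ (Sum.inl ((⟨Fv x h.1, Fv_mem h.2 hm⟩ : ↥(Xr G)), th h.1)) := by
        show psiFun G x h = _
        rw [psiFun_of_mid (not_le.2 hz) (not_le.2 hbge), midF_eq hm]
      have hk : ((phiC G x) ((psiC G x) h)).1
          = phiVal x (Fv x h.1) ((th h.1 : unitInterval) : ℝ) := by
        rw [hpsi]
        have e1 : (phiC G x) (Quot.mk _
            (Sum.inl ((⟨Fv x h.1, Fv_mem h.2 hm⟩ : ↥(Xr G)), th h.1)))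
            = phiJ G x (Sum.inl ((⟨Fv x h.1, Fv_mem h.2 hm⟩ : ↥(Xr G)), th h.1)) := rfl
        rw [e1]
        rfl
      rw [hk] at hne
      have hzznn := zz_nonneg h.2
      have hbbnn := bb_nonneg h.2
      rcases w with u | i
      · rw [phiVal_inl] at hne
        have hFv : Fv x h.1 u.1 ≠ 0 := fun hc => hne (by rw [hc, mul_zero])
        have : h.1 (eV x u.1) ≠ 0 := fun hc => hFv (by unfold Fv; rw [hc, zero_div])
        rw [eV_of_ne u.2] at this
        exact Or.inl this
      · rcases fin4 i with rfl | rfl | rfl | rfl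
        · rw [phiVal_y] at hne
          have hFv : Fv x h.1 x ≠ 0 := fun hc => hne (by rw [hc, mul_zero])
          have : h.1 (eV x x) ≠ 0 := fun hc => hFv (by unfold Fv; rw [hc, zero_div])
          rw [eV_of_eq rfl] at this
          exact Or.inl this
        · rw [phiVal_a] at hne
          exact absurd rfl hne
        · rw [phiVal_b] at hne
          -- bt θ ≠ 0 forces bb > zz ≥ 0
          have hθ : (1:ℝ)/2 < ((th h.1 : unitInterval) : ℝ) := by
            by_contra hle
            push_neg at hle
            exact hne (max_eq_right (by linarith))
          rw [th_coe] at hθ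
          have hr : 1/2 < 1/2 + bb h.1 - zz h.1 := by
            rcases lt_max_iff.1 hθ with hc | hc
            · linarith
            · exact lt_of_lt_of_le hc (min_le_right _ _)
          refine Or.inl ?_
          intro hc
          unfold bb at hr
          rw [hc] at hr
          linarith
        · rw [phiVal_z] at hne
          have hθ : ((th h.1 : unitInterval) : ℝ) < 1/2 := by
            by_contra hle
            push_neg at hle
            exact hne (max_eq_right (by linarith))
          rw [th_coe] at hθ
          have hmin : min 1 (1/2 + bb h.1 - zz h.1) < 1/2 :=
            lt_of_le_of_lt (le_max_right _ _) hθ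
          have hr : 1/2 + bb h.1 - zz h.1 < 1/2 := by
            rcases min_lt_iff.1 hmin with hc | hc
            · linarith
            · exact hc
          have hzpos : 0 < zz h.1 := by linarith
          by_cases h3 : h.1 (Sum.inr 3) ≠ 0
          · exact Or.inl h3
          · push_neg at h3
            have h1 : h.1 (Sum.inr 1) ≠ 0 := by
              intro hc
              unfold zz at hzpos
              rw [h3, hc] at hzpos
              linarith
            have hbz : bb h.1 = 0 := by
              by_contra hbne
              exact geom_pair h.2 h1 hbne adj_12
            exact Or.inr ⟨rfl, hbz⟩

variable (G x) in
noncomputable def leftHomotopy :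
    ContinuousMap.Homotopy ((phiC G x).comp (psiC G x)) (ContinuousMap.id _) where
  toFun := fun p =>
    ⟨fun w => (p.1 : ℝ) * p.2.1 w + (1 - (p.1 : ℝ)) * ((phiC G x) ((psiC G x) p.2)).1 w,
      line_mem p.2.2 ((phiC G x) ((psiC G x) p.2)).2 (phipsi_supp G x p.2)
        p.1.2.1 (by linarith [p.1.2.2]) (by ring)⟩
  continuous_toFun := by
    refine Continuous.subtype_mk ?_ _
    refine continuous_pi ?_
    intro w
    have hk : Continuous (fun p : unitInterval × ↥(Jr G x) =>
        ((phiC G x) ((psiC G x) p.2)).1 w) :=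
      (continuous_apply w).comp (continuous_subtype_val.comp
        (((phiC G x).continuous.comp (psiC G x).continuous).comp continuous_snd))
    have hs : Continuous (fun p : unitInterval × ↥(Jr G x) => (p.1 : ℝ)) :=
      continuous_subtype_val.comp continuous_fst
    have hh : Continuous (fun p : unitInterval × ↥(Jr G x) => p.2.1 w) :=
      (continuous_apply w).comp (continuous_subtype_val.comp continuous_snd)
    exact (hs.mul hh).add ((continuous_const.sub hs).mul hk)
  map_zero_left := by
    intro hpt
    apply Subtype.ext
    funext w
    show (0:ℝ) * hpt.1 w + (1 - (0:ℝ)) * _ = _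
    ring_nf
    rfl
  map_one_left := by
    intro hpt
    apply Subtype.ext
    funext w
    show (1:ℝ) * hpt.1 w + (1 - (1:ℝ)) * _ = _
    ring_nf
    rfl

end LozinMain

/-- The independence complex of the Lozin transform `L_x(G; N_G(x), ∅)` is homotopy
equivalent to the unreduced suspension of the independence complex of `G`. -/
theorem stmt_8 {V : Type*} (G : SimpleGraph V) (x : V) :
    Nonempty (ContinuousMap.HomotopyEquiv
      (geomRealization (indComplex (lozin G x (G.neighborSet x) ∅)))
      (Susp (geomRealization (indComplex G)))) := by
  exact ⟨{ toFun := LozinMain.psiC G x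
           invFun := LozinMain.phiC G x
           left_inv := ⟨LozinMain.leftHomotopy G x⟩
           right_inv := ⟨LozinMain.rightHomotopy G x⟩ }⟩
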